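/- Let H ≥ 1 and T ≥ 1 be integers, set γ := 1 + 1/H, and let the weights α_t^j be defined from α_t := (H+1)/(H+t) by α_t^t := α_t and α_t^j := α_j·∏_{k=j+1}^t (1 − α_k) for 1 ≤ j < t. Let M ≥ 0 and suppose δ : {1,…,T} × {1,…,H+1} → ℝ satisfies δ^t_{H+1} = 0 for all t and, for all h ∈ {1,…,H} and t ∈ {1,…,T}, δ^t_h ≤ M/t + Σ_{j=1}^t α_t^j·δ^j_{h+1}. Then for all h ∈ {1,…,H} and t ∈ {1,…,T}: δ^t_h ≤ (Σ_{h'=h}^H γ^{2(H−h'+1/2)})·M/t; in particular δ^T_1 ≤ e²·H·M/T. -/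

import Mathlib

/-- Value-iteration step size `α_t = (H+1)/(H+t)`. -/
noncomputable def stepAlpha (H t : ℕ) : ℝ := ((H : ℝ) + 1) / ((H : ℝ) + t)

/-- Anytime-averaging weights `α_t^j = α_j ∏_{k=j+1}^t (1 − α_k)` (so `α_t^t = α_t`). -/
noncomputable def alphaW (H t j : ℕ) : ℝ :=
  stepAlpha H j * ∏ k ∈ Finset.Icc (j + 1) t, (1 - stepAlpha H k)

lemma alphaW_nonneg (H t j : ℕ) (hj : 1 ≤ j) : 0 ≤ alphaW H t j := by
  unfold alphaW stepAlpha
  apply mul_nonneg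
  · apply div_nonneg <;> positivity
  · apply Finset.prod_nonneg
    intro k hk
    simp only [Finset.mem_Icc] at hk
    have hk1 : (1:ℝ) ≤ k := by exact_mod_cast Nat.one_le_iff_ne_zero.mpr (by omega)
    have hpos : (0:ℝ) < (H:ℝ) + k := by positivity
    rw [sub_nonneg, div_le_one hpos]
    linarith

lemma sumB (H : ℕ) (hH : 1 ≤ H) : ∀ t : ℕ, 1 ≤ t →
    ∑ j ∈ Finset.Icc 1 t, alphaW H t j / (j:ℝ) ≤ (1 + 1/(H:ℝ)) / t := by
  have hHpos : (0:ℝ) < H := by exact_mod_cast hH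
  intro t
  induction t with
  | zero => omega
  | succ n ih =>
    intro _
    rcases Nat.eq_zero_or_pos n with h0 | hn
    · subst h0
      simp only [Finset.Icc_self, Finset.sum_singleton]
      have h1 : alphaW H 1 1 = 1 := by
        unfold alphaW stepAlpha
        rw [Finset.Icc_eq_empty (by omega)]
        simp [div_self (show (H:ℝ)+1 ≠ 0 by positivity)]
      rw [h1]
      have : (0:ℝ) ≤ 1/(H:ℝ) := by positivity
      norm_num
    · have hnR : (0:ℝ) < n := by exact_mod_cast hn
      rw [Finset.sum_Icc_succ_top (by omega : 1 ≤ n + 1)]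
      have hsplit : ∀ j ∈ Finset.Icc 1 n,
          alphaW H (n+1) j / (j:ℝ) = (1 - stepAlpha H (n+1)) * (alphaW H n j / (j:ℝ)) := by
        intro j hj
        simp only [Finset.mem_Icc] at hj
        unfold alphaW
        rw [Finset.prod_Icc_succ_top (by omega : j + 1 ≤ n + 1)]
        ring
      rw [Finset.sum_congr rfl hsplit, ← Finset.mul_sum]
      have htail : alphaW H (n+1) (n+1) = stepAlpha H (n+1) := by
        unfold alphaW
        rw [Finset.Icc_eq_empty (by omega)]
        simp
      rw [htail]
      have hα : (1 : ℝ) - stepAlpha H (n+1) = (n:ℝ) / ((H:ℝ) + (n+1)) := by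
        unfold stepAlpha
        have : (0:ℝ) < (H:ℝ) + ((n:ℝ)+1) := by positivity
        field_simp
        push_cast; ring
      have hαnn : (0:ℝ) ≤ 1 - stepAlpha H (n+1) := by rw [hα]; positivity
      have h1 : (1 - stepAlpha H (n+1)) * (∑ j ∈ Finset.Icc 1 n, alphaW H n j / (j:ℝ))
          ≤ (1 - stepAlpha H (n+1)) * ((1 + 1/(H:ℝ)) / n) :=
        mul_le_mul_of_nonneg_left (ih hn) hαnn
      have key : (1 - stepAlpha H (n+1)) * ((1 + 1/(H:ℝ)) / n) + stepAlpha H (n+1) / ((n:ℝ)+1)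
          = (1 + 1/(H:ℝ)) / ((n:ℝ)+1) := by
        rw [hα]; unfold stepAlpha
        have h2 : (0:ℝ) < (H:ℝ) + ((n:ℝ)+1) := by positivity
        field_simp
        push_cast
        ring
      push_cast
      push_cast at key h1
      linarith

lemma gammaQ (H : ℕ) (hH : 1 ≤ H) (n : ℕ) :
    1 + (1/(H:ℝ)) * ∑ i ∈ Finset.range n, (1 + 1/(H:ℝ)) ^ (2*i+1)
      ≤ (1 + 1/(H:ℝ)) ^ (2*n+1) := by
  have hHpos : (0:ℝ) < H := by exact_mod_cast hH
  have hγ1 : (1:ℝ) ≤ 1 + 1/(H:ℝ) := by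
    have : (0:ℝ) ≤ 1/(H:ℝ) := by positivity
    linarith
  induction n with
  | zero => simpa using hγ1
  | succ n ih =>
    rw [Finset.sum_range_succ, mul_add]
    have h1 : 1 + (1/(H:ℝ)) * ∑ i ∈ Finset.range n, (1 + 1/(H:ℝ)) ^ (2*i+1)
        + (1/(H:ℝ)) * (1 + 1/(H:ℝ)) ^ (2*n+1)
        ≤ (1 + 1/(H:ℝ)) ^ (2*n+1) + (1/(H:ℝ)) * (1 + 1/(H:ℝ)) ^ (2*n+1) := by
      linarith
    have h2 : (1 + 1/(H:ℝ)) ^ (2*n+1) + (1/(H:ℝ)) * (1 + 1/(H:ℝ)) ^ (2*n+1)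
        = (1 + 1/(H:ℝ)) ^ (2*n+2) := by ring
    have h3 : (1 + 1/(H:ℝ)) ^ (2*n+2) ≤ (1 + 1/(H:ℝ)) ^ (2*(n+1)+1) :=
      pow_le_pow_right₀ hγ1 (by omega)
    linarith [h1, h2 ▸ h1]

lemma reindexC (H h : ℕ) :
    ∑ h' ∈ Finset.Icc h H, (1 + 1/(H:ℝ)) ^ (2*(H-h')+1)
      = ∑ i ∈ Finset.range (H+1-h), (1 + 1/(H:ℝ)) ^ (2*i+1) := by
  apply Finset.sum_nbij' (fun h' => H - h') (fun i => H - i)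
  · intro a ha; simp only [Finset.mem_Icc] at ha; simp only [Finset.mem_range]; omega
  · intro a ha; simp only [Finset.mem_range] at ha; simp only [Finset.mem_Icc]; omega
  · intro a ha; simp only [Finset.mem_Icc] at ha; omega
  · intro a ha; simp only [Finset.mem_range] at ha; omega
  · intro a ha; rfl


/-- the CCE-gap recursion.  If `δ^t_{H+1} = 0` and
`δ^t_h ≤ M/t + Σ_{j=1}^t α_t^j δ^j_{h+1}`, then with `γ = 1 + 1/H`,
`δ^t_h ≤ (Σ_{h'=h}^H γ^{2(H−h')+1}) M/t`; in particular `δ^T_1 ≤ e² H M / T`.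
(Note `γ^{2(H−h'+1/2)} = γ^{2(H−h')+1}`.) -/
theorem cce_gap_recursion (H T : ℕ) (hH : 1 ≤ H) (hT : 1 ≤ T)
    (M : ℝ) (hM : 0 ≤ M)
    (δ : ℕ → ℕ → ℝ)
    (hend : ∀ t ∈ Finset.Icc 1 T, δ t (H + 1) = 0)
    (hrec : ∀ h ∈ Finset.Icc 1 H, ∀ t ∈ Finset.Icc 1 T,
      δ t h ≤ M / t + ∑ j ∈ Finset.Icc 1 t, alphaW H t j * δ j (h + 1)) :
    (∀ h ∈ Finset.Icc 1 H, ∀ t ∈ Finset.Icc 1 T,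
      δ t h ≤ (∑ h' ∈ Finset.Icc h H, (1 + 1 / (H : ℝ)) ^ (2 * (H - h') + 1)) * M / t)
    ∧ δ T 1 ≤ Real.exp 2 * (H : ℝ) * M / T := by
  have hHpos : (0:ℝ) < H := by exact_mod_cast hH
  have hγ1 : (1:ℝ) ≤ 1 + 1/(H:ℝ) := by
    have : (0:ℝ) ≤ 1/(H:ℝ) := by positivity
    linarith
  set C : ℕ → ℝ := fun h => ∑ h' ∈ Finset.Icc h H, (1 + 1/(H:ℝ)) ^ (2*(H-h')+1) with hC
  have Cnn : ∀ h, 0 ≤ C h := by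
    intro h
    apply Finset.sum_nonneg
    intro h' _
    positivity
  have main : ∀ n : ℕ, ∀ h, H + 1 - h ≤ n → 1 ≤ h → h ≤ H + 1 →
      ∀ t ∈ Finset.Icc 1 T, δ t h ≤ C h * M / t := by
    intro n
    induction n with
    | zero =>
      intro h hle h1 h2 t ht
      have : h = H + 1 := by omega
      subst this
      rw [hend t ht]
      have he : Finset.Icc (H+1) H = ∅ := Finset.Icc_eq_empty (by omega)
      have : C (H+1) = 0 := by simp only [hC, he, Finset.sum_empty]
      rw [this]
      simp
    | succ n ih =>
      intro h hle h1 h2 t ht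
      by_cases hcase : h = H + 1
      · subst hcase
        rw [hend t ht]
        have he : Finset.Icc (H+1) H = ∅ := Finset.Icc_eq_empty (by omega)
        have : C (H+1) = 0 := by simp only [hC, he, Finset.sum_empty]
        rw [this]; simp
      · have hhH : h ≤ H := by omega
        have htm := Finset.mem_Icc.mp ht
        have htpos : (0:ℝ) < t := by exact_mod_cast htm.1
        have hr := hrec h (Finset.mem_Icc.mpr ⟨h1, hhH⟩) t ht
        -- bound the sum
        have hsum1 : ∑ j ∈ Finset.Icc 1 t, alphaW H t j * δ j (h + 1)
            ≤ ∑ j ∈ Finset.Icc 1 t, alphaW H t j * (C (h+1) * M / j) := by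
          apply Finset.sum_le_sum
          intro j hj
          have hjm := Finset.mem_Icc.mp hj
          have hjT : j ∈ Finset.Icc 1 T := Finset.mem_Icc.mpr ⟨hjm.1, le_trans hjm.2 htm.2⟩
          exact mul_le_mul_of_nonneg_left
            (ih (h+1) (by omega) (by omega) (by omega) j hjT)
            (alphaW_nonneg H t j hjm.1)
        have hsum2 : ∑ j ∈ Finset.Icc 1 t, alphaW H t j * (C (h+1) * M / j)
            = C (h+1) * M * ∑ j ∈ Finset.Icc 1 t, alphaW H t j / (j:ℝ) := by
          rw [Finset.mul_sum]
          apply Finset.sum_congr rfl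
          intro j _
          ring
        have hsum3 : C (h+1) * M * (∑ j ∈ Finset.Icc 1 t, alphaW H t j / (j:ℝ))
            ≤ C (h+1) * M * ((1 + 1/(H:ℝ)) / t) :=
          mul_le_mul_of_nonneg_left (sumB H hH t htm.1) (mul_nonneg (Cnn _) hM)
        -- scalar inequality
        have hscal : 1 + (1 + 1/(H:ℝ)) * C (h+1) ≤ C h := by
          rw [hC]
          simp only []
          rw [reindexC, reindexC]
          have e1 : H + 1 - h = (H - h) + 1 := by omega
          have e2 : H + 1 - (h+1) = H - h := by omega
          rw [e1, e2, Finset.sum_range_succ]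
          have hq := gammaQ H hH (H - h)
          have hexp : (1 + 1/(H:ℝ)) * (∑ i ∈ Finset.range (H-h), (1 + 1/(H:ℝ)) ^ (2*i+1))
              = (∑ i ∈ Finset.range (H-h), (1 + 1/(H:ℝ)) ^ (2*i+1))
                + (1/(H:ℝ)) * (∑ i ∈ Finset.range (H-h), (1 + 1/(H:ℝ)) ^ (2*i+1)) := by
            ring
          linarith
        have hmul : (1 + (1 + 1/(H:ℝ)) * C (h+1)) * (M / t) ≤ C h * (M / t) :=
          mul_le_mul_of_nonneg_right hscal (div_nonneg hM htpos.le)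
        have hrw1 : (1 + (1 + 1/(H:ℝ)) * C (h+1)) * (M / t)
            = M / t + C (h+1) * M * ((1 + 1/(H:ℝ)) / t) := by ring
        have hrw2 : C h * (M / t) = C h * M / t := by ring
        linarith
  have part1 : ∀ h ∈ Finset.Icc 1 H, ∀ t ∈ Finset.Icc 1 T,
      δ t h ≤ (∑ h' ∈ Finset.Icc h H, (1 + 1 / (H : ℝ)) ^ (2 * (H - h') + 1)) * M / t := by
    intro h hh t ht
    have hhm := Finset.mem_Icc.mp hh
    exact main (H + 1 - h) h le_rfl hhm.1 (by omega) t ht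
  refine ⟨part1, ?_⟩
  have hTmem : T ∈ Finset.Icc 1 T := Finset.mem_Icc.mpr ⟨hT, le_rfl⟩
  have h1 := part1 1 (Finset.mem_Icc.mpr ⟨le_rfl, hH⟩) T hTmem
  have hTpos : (0:ℝ) < T := by exact_mod_cast hT
  -- bound C 1 ≤ H * exp 2
  have hγe : (1 + 1/(H:ℝ)) ≤ Real.exp (1/(H:ℝ)) := by
    have := Real.add_one_le_exp (1/(H:ℝ))
    linarith
  have hpow : (1 + 1/(H:ℝ)) ^ (2*H) ≤ Real.exp 2 := by
    calc (1 + 1/(H:ℝ)) ^ (2*H) ≤ (Real.exp (1/(H:ℝ))) ^ (2*H) :=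
          pow_le_pow_left₀ (by linarith) hγe _
      _ = Real.exp (((2*H : ℕ):ℝ) * (1/(H:ℝ))) := by rw [Real.exp_nat_mul]
      _ = Real.exp 2 := by
          congr 1
          push_cast
          field_simp
  have hCbound : (∑ h' ∈ Finset.Icc 1 H, (1 + 1/(H:ℝ)) ^ (2*(H-h')+1)) ≤ (H:ℝ) * Real.exp 2 := by
    rw [reindexC]
    have : ∀ i ∈ Finset.range (H + 1 - 1), (1 + 1/(H:ℝ)) ^ (2*i+1) ≤ Real.exp 2 := by
      intro i hi
      have him := Finset.mem_range.mp hi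
      calc (1 + 1/(H:ℝ)) ^ (2*i+1) ≤ (1 + 1/(H:ℝ)) ^ (2*H) :=
            pow_le_pow_right₀ hγ1 (by omega)
        _ ≤ Real.exp 2 := hpow
    calc ∑ i ∈ Finset.range (H + 1 - 1), (1 + 1/(H:ℝ)) ^ (2*i+1)
        ≤ ∑ _i ∈ Finset.range (H + 1 - 1), Real.exp 2 := Finset.sum_le_sum this
      _ = (H:ℝ) * Real.exp 2 := by
          rw [Finset.sum_const, Finset.card_range, nsmul_eq_mul]
          norm_num
  have h2 : (∑ h' ∈ Finset.Icc 1 H, (1 + 1/(H:ℝ)) ^ (2*(H-h')+1)) * M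
      ≤ Real.exp 2 * (H:ℝ) * M := by
    have h3 := mul_le_mul_of_nonneg_right hCbound hM
    nlinarith [h3]
  have hfin : (∑ h' ∈ Finset.Icc 1 H, (1 + 1/(H:ℝ)) ^ (2*(H-h')+1)) * M / T
      ≤ Real.exp 2 * (H:ℝ) * M / T := by
    gcongr
  exact h1.trans hfin
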